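/- (Theorem 1, general threshold rules.) Let X be a real n×p matrix, y ∈ ℝⁿ, and η ≥ 0 such that the operator norm of Iₚ − η XᵀX is at most 1. For each i = 1,…,n let Θᵢ : ℝ → ℝ be a threshold rule — (1) nondecreasing; (2) odd; (3) 0 ≤ Θᵢ(x) ≤ x for x ≥ 0 and Θᵢ(x) → ∞ as x → ∞; (4) nonexpansive — and let Pᵢ(θ) = ∫₀^{|θ|} (Θᵢ⁻¹(u) − u) du with Θᵢ⁻¹(u) = sup{t : Θᵢ(t) ≤ u}. Define F(β, γ) = ½‖y − Xβ − γ‖₂² + Σᵢ Pᵢ(γᵢ). Given (β, γ), set y_adj = y − γ, β' = β − η Xᵀ(Xβ − y_adj), r = y − Xβ', and γ'ᵢ = Θᵢ(rᵢ) for each i. Then F(β, γ) ≥ F(β', γ) ≥ F(β', γ'); in particular, the sequence of objective values produced by the IGDTS iteration is nonincreasing. -/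

import Mathlib

open Matrix Filter MeasureTheory intervalIntegral

section key

variable (Θ : ℝ → ℝ)

lemma set_bdd (h1 : Monotone Θ) (h3b : Tendsto Θ atTop atTop) (u : ℝ) :
    BddAbove {t : ℝ | Θ t ≤ u} := by
  obtain ⟨T, hT⟩ := eventually_atTop.mp (h3b.eventually_ge_atTop (u + 1))
  refine ⟨T, fun t ht => ?_⟩
  by_contra hlt
  push_neg at hlt
  have := hT t hlt.le
  simp only [Set.mem_setOf_eq] at ht
  linarith

lemma Tinv_mono (h1 : Monotone Θ) (h3b : Tendsto Θ atTop atTop)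
    (h3a : ∀ x : ℝ, 0 ≤ x → 0 ≤ Θ x ∧ Θ x ≤ x) :
    MonotoneOn (fun u => sSup {t : ℝ | Θ t ≤ u}) (Set.Ici (0:ℝ)) := by
  intro a ha b hb hab
  refine csSup_le_csSup (set_bdd Θ h1 h3b b) ⟨a, (h3a a ha).2⟩ ?_
  intro t ht; exact le_trans ht hab

lemma Tinv_ge_self (h1 : Monotone Θ) (h3b : Tendsto Θ atTop atTop)
    (h3a : ∀ x : ℝ, 0 ≤ x → 0 ≤ Θ x ∧ Θ x ≤ x) {u : ℝ} (hu : 0 ≤ u) :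
    u ≤ sSup {t : ℝ | Θ t ≤ u} :=
  le_csSup (set_bdd Θ h1 h3b u) (h3a u hu).2

lemma Tinv_ge (h1 : Monotone Θ) (h3b : Tendsto Θ atTop atTop) {r u : ℝ} (h : Θ r ≤ u) :
    r ≤ sSup {t : ℝ | Θ t ≤ u} :=
  le_csSup (set_bdd Θ h1 h3b u) h

lemma Tinv_le (h1 : Monotone Θ)
    (h3a : ∀ x : ℝ, 0 ≤ x → 0 ≤ Θ x ∧ Θ x ≤ x) {r u : ℝ} (hu : 0 ≤ u) (h : u < Θ r) :
    sSup {t : ℝ | Θ t ≤ u} ≤ r := by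
  refine csSup_le ⟨u, (h3a u hu).2⟩ ?_
  intro t ht
  by_contra hlt
  push_neg at hlt
  exact absurd (le_trans (h1 hlt.le) ht) (not_le.mpr h)

end key

section key2

lemma key_pos (Θ : ℝ → ℝ) (h1 : Monotone Θ)
    (h3a : ∀ x : ℝ, 0 ≤ x → 0 ≤ Θ x ∧ Θ x ≤ x) (h3b : Tendsto Θ atTop atTop)
    {r : ℝ} (hr : 0 ≤ r) {g : ℝ} (hg : 0 ≤ g) :
    (1/2) * (r - Θ r)^2 + ∫ u in (0:ℝ)..|Θ r|, (sSup {t : ℝ | Θ t ≤ u} - u)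
      ≤ (1/2) * (r - g)^2 + ∫ u in (0:ℝ)..|g|, (sSup {t : ℝ | Θ t ≤ u} - u) := by
  set T : ℝ → ℝ := fun u => sSup {t : ℝ | Θ t ≤ u} with hT
  set t₀ : ℝ := Θ r with ht₀def
  obtain ⟨ht₀0, ht₀r⟩ := h3a r hr
  have habs1 : |t₀| = t₀ := abs_of_nonneg ht₀0
  have habs2 : |g| = g := abs_of_nonneg hg
  rw [habs1, habs2]
  have hint : ∀ a b : ℝ, 0 ≤ a → 0 ≤ b →
      IntervalIntegrable (fun u => T u - u) volume a b := by
    intro a b ha hb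
    have hm : MonotoneOn T (Set.uIcc a b) := by
      refine (Tinv_mono Θ h1 h3b h3a).mono ?_
      intro x hx
      exact le_trans (le_min ha hb) hx.1
    exact hm.intervalIntegrable.sub intervalIntegrable_id
  have hsplit : (∫ u in (0:ℝ)..t₀, (T u - u)) + (∫ u in t₀..g, (T u - u))
      = ∫ u in (0:ℝ)..g, (T u - u) :=
    intervalIntegral.integral_add_adjacent_intervals (hint 0 t₀ le_rfl ht₀0)
      (hint t₀ g ht₀0 hg)
  have hintc : IntervalIntegrable (fun u : ℝ => r - u) volume t₀ g :=
    (_root_.intervalIntegrable_const).sub intervalIntegrable_id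
  have hIc : (∫ u in t₀..g, (r - u)) = r * (g - t₀) - (g^2 - t₀^2)/2 := by
    rw [intervalIntegral.integral_sub _root_.intervalIntegrable_const intervalIntegrable_id,
      intervalIntegral.integral_const, integral_id]
    simp; ring
  have hdiff : (∫ u in t₀..g, (T u - u)) - (∫ u in t₀..g, (r - u))
      = ∫ u in t₀..g, (T u - r) := by
    rw [← intervalIntegral.integral_sub (hint t₀ g ht₀0 hg) hintc]
    congr 1; funext u; ring
  have hkey : 0 ≤ ∫ u in t₀..g, (T u - r) := by
    rcases le_or_gt t₀ g with hle | hlt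
    · refine intervalIntegral.integral_nonneg hle ?_
      intro u hu
      have : r ≤ T u := Tinv_ge Θ h1 h3b (le_trans (le_of_eq ht₀def.symm) hu.1)
      linarith
    · rw [intervalIntegral.integral_symm]
      have hneg : (∫ u in g..t₀, (T u - r)) = - ∫ u in g..t₀, (r - T u) := by
        rw [← intervalIntegral.integral_neg]
        congr 1; funext u; ring
      have hpos : 0 ≤ ∫ u in g..t₀, (r - T u) := by
        refine intervalIntegral.integral_nonneg_of_ae_restrict hlt.le ?_
        have hne : ∀ᵐ u : ℝ ∂(volume.restrict (Set.Icc g t₀)), u ≠ t₀ := by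
          refine ae_restrict_of_ae ?_
          have : (volume : Measure ℝ) {t₀} = 0 := Real.volume_singleton
          exact (MeasureTheory.measure_eq_zero_iff_ae_notMem.mp this).mono (fun a ha => ha)
        filter_upwards [hne, MeasureTheory.ae_restrict_mem measurableSet_Icc]
          with u hune hu
        have hu0 : 0 ≤ u := le_trans hg hu.1
        have hult : u < t₀ := lt_of_le_of_ne hu.2 hune
        have : T u ≤ r := Tinv_le Θ h1 h3a hu0 (by rw [← ht₀def] at *; exact hult)
        simp only [Pi.zero_apply]
        linarith
      linarith
  have hident : (1/2)*(r-t₀)^2 = (1/2)*(r-g)^2 + (r*(g-t₀) - (g^2-t₀^2)/2) := by ring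
  have hI : r * (g - t₀) - (g^2 - t₀^2)/2 ≤ ∫ u in t₀..g, (T u - u) := by
    rw [← hIc]; linarith
  linarith [hsplit, hI, hident]

end key2

lemma key_all (Θ : ℝ → ℝ) (h1 : Monotone Θ) (h2 : ∀ x : ℝ, Θ (-x) = -Θ x)
    (h3a : ∀ x : ℝ, 0 ≤ x → 0 ≤ Θ x ∧ Θ x ≤ x) (h3b : Tendsto Θ atTop atTop)
    (r g : ℝ) :
    (1/2) * (r - Θ r)^2 + ∫ u in (0:ℝ)..|Θ r|, (sSup {t : ℝ | Θ t ≤ u} - u)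
      ≤ (1/2) * (r - g)^2 + ∫ u in (0:ℝ)..|g|, (sSup {t : ℝ | Θ t ≤ u} - u) := by
  have main : ∀ r g : ℝ, 0 ≤ r →
      (1/2) * (r - Θ r)^2 + ∫ u in (0:ℝ)..|Θ r|, (sSup {t : ℝ | Θ t ≤ u} - u)
        ≤ (1/2) * (r - g)^2 + ∫ u in (0:ℝ)..|g|, (sSup {t : ℝ | Θ t ≤ u} - u) := by
    intro r g hr
    rcases le_or_gt 0 g with hg | hg
    · exact key_pos Θ h1 h3a h3b hr hg
    · have h := key_pos Θ h1 h3a h3b hr (neg_nonneg.mpr hg.le)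
      rw [abs_neg] at h
      have hsq : (r - -g)^2 ≤ (r - g)^2 := by nlinarith
      linarith
  rcases le_or_gt 0 r with hr | hr
  · exact main r g hr
  · have h := main (-r) (-g) (neg_nonneg.mpr hr.le)
    rw [h2 r, abs_neg, abs_neg] at h
    have e1 : (-r - -Θ r)^2 = (r - Θ r)^2 := by ring
    have e2 : (-r - -g)^2 = (r - g)^2 := by ring
    rw [e1, e2] at h
    exact h

open RealInnerProductSpace in
lemma opkey {n p : ℕ} (X : Matrix (Fin n) (Fin p) ℝ) (η : ℝ) (hη : 0 ≤ η)
    (hop : ‖Matrix.toEuclideanCLM (𝕜 := ℝ)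
        ((1 : Matrix (Fin p) (Fin p) ℝ) - η • (Xᵀ * X))‖ ≤ 1)
    (v : Fin p → ℝ) :
    η * ∑ i, (X.mulVec v i)^2 ≤ 2 * ∑ j, (v j)^2 := by
  set A : Matrix (Fin p) (Fin p) ℝ := (1 : Matrix (Fin p) (Fin p) ℝ) - η • (Xᵀ * X) with hA
  set M := Matrix.toEuclideanCLM (𝕜 := ℝ) A with hM
  set u : EuclideanSpace ℝ (Fin p) := (WithLp.equiv 2 _).symm v with hu
  have h1 : ‖M u‖ ≤ ‖u‖ := by
    calc ‖M u‖ ≤ ‖M‖ * ‖u‖ := M.le_opNorm u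
      _ ≤ 1 * ‖u‖ := mul_le_mul_of_nonneg_right hop (norm_nonneg u)
      _ = ‖u‖ := one_mul _
  have h2 : -(‖u‖^2) ≤ ⟪u, M u⟫ := by
    have hb := abs_le.mp (abs_real_inner_le_norm u (M u))
    nlinarith [norm_nonneg u]
  have hMu : M u = (WithLp.equiv 2 _).symm
      (fun j => v j - η * (Xᵀ.mulVec (X.mulVec v)) j) := by
    rw [hu, WithLp.equiv_symm_apply, Matrix.toEuclideanCLM_toLp, ← Matrix.toLin'_apply]
    congr 1
    rw [Matrix.toLin'_apply, hA, Matrix.sub_mulVec, Matrix.one_mulVec,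
      Matrix.smul_mulVec, ← Matrix.mulVec_mulVec]
    funext j
    simp [Matrix.mulVec_mulVec]
  have hip : ∑ j, v j * (Xᵀ.mulVec (X.mulVec v)) j = ∑ i, (X.mulVec v i)^2 := by
    have : v ⬝ᵥ (Xᵀ.mulVec (X.mulVec v)) = (X.mulVec v) ⬝ᵥ (X.mulVec v) := by
      rw [Matrix.dotProduct_mulVec, Matrix.vecMul_transpose]
    simpa [dotProduct, sq] using this
  have hinner : ⟪u, M u⟫ = ∑ j, (v j)^2 - η * ∑ i, (X.mulVec v i)^2 := by
    rw [hMu, hu]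
    simp only [PiLp.inner_apply, RCLike.inner_apply, conj_trivial,
      WithLp.equiv_symm_apply, WithLp.ofLp_toLp]
    rw [← hip]
    rw [Finset.mul_sum, ← Finset.sum_sub_distrib]
    congr 1; funext j; ring
  have hnorm : ‖u‖^2 = ∑ j, (v j)^2 := by
    rw [← real_inner_self_eq_norm_sq, hu]
    simp only [PiLp.inner_apply, RCLike.inner_apply, conj_trivial,
      WithLp.equiv_symm_apply, WithLp.ofLp_toLp]
    congr 1; funext j; ring
  rw [hinner] at h2
  rw [hnorm] at h2
  linarith


/-- Theorem 1 (general threshold rules): for coordinatewise threshold rules `Θᵢ` with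
associated penalties `Pᵢ(θ) = ∫₀^{|θ|} (Θᵢ⁻¹(u) − u) du`, one IGDTS iteration — a
gradient step on `β` followed by coordinatewise thresholding of the new residual —
does not increase the objective `F(β, γ) = ½‖y − Xβ − γ‖₂² + Σᵢ Pᵢ(γᵢ)`:
`F(β, γ) ≥ F(β', γ) ≥ F(β', γ')`. -/
theorem igdts_descent_general (n p : ℕ)
    (X : Matrix (Fin n) (Fin p) ℝ) (y : Fin n → ℝ)
    (η : ℝ) (hη : 0 ≤ η)
    (hop : ‖Matrix.toEuclideanCLM (𝕜 := ℝ)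
        ((1 : Matrix (Fin p) (Fin p) ℝ) - η • (Xᵀ * X))‖ ≤ 1)
    (Θ : Fin n → ℝ → ℝ)
    (h1 : ∀ i, Monotone (Θ i))
    (h2 : ∀ i, ∀ x : ℝ, Θ i (-x) = -Θ i x)
    (h3 : ∀ i, (∀ x : ℝ, 0 ≤ x → 0 ≤ Θ i x ∧ Θ i x ≤ x) ∧ Tendsto (Θ i) atTop atTop)
    (h4 : ∀ i, ∀ x z : ℝ, |Θ i x - Θ i z| ≤ |x - z|)
    (P : Fin n → ℝ → ℝ)
    (hP : ∀ i, ∀ θ : ℝ, P i θ = ∫ u in (0 : ℝ)..|θ|, (sSup {t : ℝ | Θ i t ≤ u} - u))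
    (F : (Fin p → ℝ) → (Fin n → ℝ) → ℝ)
    (hF : ∀ β γ, F β γ = (1 / 2) * (∑ i, (y i - X.mulVec β i - γ i) ^ 2) + ∑ i, P i (γ i))
    (β : Fin p → ℝ) (γ : Fin n → ℝ)
    (yadj : Fin n → ℝ) (hyadj : yadj = y - γ)
    (β' : Fin p → ℝ) (hβ' : β' = β - η • (Xᵀ.mulVec (X.mulVec β - yadj)))
    (r : Fin n → ℝ) (hr : r = y - X.mulVec β')
    (γ' : Fin n → ℝ) (hγ' : ∀ i, γ' i = Θ i (r i)) :
    F β' γ ≤ F β γ ∧ F β' γ' ≤ F β' γ := by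
  constructor
  · -- Part 1: gradient step decreases the objective
    rw [hF, hF]
    have hmain : ∑ i, (y i - X.mulVec β' i - γ i) ^ 2
        ≤ ∑ i, (y i - X.mulVec β i - γ i) ^ 2 := by
      set v : Fin p → ℝ := Xᵀ.mulVec (X.mulVec β - yadj) with hv
      set w : Fin n → ℝ := X.mulVec v with hw
      set e : Fin n → ℝ := fun i => yadj i - X.mulVec β i with he
      have hXβ' : X.mulVec β' = X.mulVec β - η • w := by
        rw [hβ', Matrix.mulVec_sub, Matrix.mulVec_smul]
      have hterm1 : ∀ i, y i - X.mulVec β' i - γ i = e i + η * w i := by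
        intro i
        rw [hXβ']
        simp only [he, hyadj, Pi.sub_apply, Pi.smul_apply, smul_eq_mul]
        ring
      have hterm2 : ∀ i, y i - X.mulVec β i - γ i = e i := by
        intro i
        simp only [he, hyadj, Pi.sub_apply]
        ring
      have hcross : ∑ i, e i * w i = -∑ j, (v j)^2 := by
        have hd : e ⬝ᵥ (X.mulVec v) = (Xᵀ.mulVec e) ⬝ᵥ v := by
          rw [Matrix.dotProduct_mulVec, Matrix.mulVec_transpose]
        have hXte : Xᵀ.mulVec e = -v := by
          rw [hv, he]
          have : (fun i => yadj i - X.mulVec β i) = -(X.mulVec β - yadj) := by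
            funext i; simp [Pi.neg_apply, Pi.sub_apply]
          rw [this, Matrix.mulVec_neg]
        have := hd
        rw [hXte] at this
        simpa [dotProduct, hw, sq, Finset.sum_neg_distrib] using this
      have hexp : ∑ i, (e i + η * w i)^2
          = ∑ i, (e i)^2 + 2 * η * (∑ i, e i * w i) + η^2 * ∑ i, (w i)^2 := by
        rw [Finset.mul_sum, Finset.mul_sum, ← Finset.sum_add_distrib,
          ← Finset.sum_add_distrib]
        congr 1; funext i; ring
      have hopk := opkey X η hη hop v
      have hwnn : (0:ℝ) ≤ ∑ i, (w i)^2 :=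
        Finset.sum_nonneg fun i _ => sq_nonneg _
      have hkey : η^2 * ∑ i, (w i)^2 ≤ 2 * η * ∑ j, (v j)^2 := by
        have := mul_le_mul_of_nonneg_left hopk hη
        calc η^2 * ∑ i, (w i)^2 = η * (η * ∑ i, (w i)^2) := by ring
          _ ≤ η * (2 * ∑ j, (v j)^2) := this
          _ = 2 * η * ∑ j, (v j)^2 := by ring
      calc ∑ i, (y i - X.mulVec β' i - γ i) ^ 2
          = ∑ i, (e i + η * w i)^2 := by
            congr 1; funext i; rw [hterm1]
        _ = ∑ i, (e i)^2 + 2 * η * (∑ i, e i * w i) + η^2 * ∑ i, (w i)^2 := hexp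
        _ ≤ ∑ i, (e i)^2 := by rw [hcross]; linarith
        _ = ∑ i, (y i - X.mulVec β i - γ i) ^ 2 := by
            congr 1; funext i; rw [hterm2]
    linarith
  · -- Part 2: thresholding step decreases the objective
    rw [hF, hF]
    have hy : ∀ i, y i - X.mulVec β' i = r i := by
      intro i; rw [hr]; simp [Pi.sub_apply]
    have hterm : ∀ i ∈ Finset.univ, (1/2) * (r i - γ' i)^2 + P i (γ' i)
        ≤ (1/2) * (r i - γ i)^2 + P i (γ i) := by
      intro i _
      rw [hγ' i, hP, hP]
      exact key_all (Θ i) (h1 i) (h2 i) (h3 i).1 (h3 i).2 (r i) (γ i)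
    have hsum := Finset.sum_le_sum hterm
    rw [Finset.sum_add_distrib, Finset.sum_add_distrib] at hsum
    have e1 : ∀ i, (y i - X.mulVec β' i - γ' i)^2 = (r i - γ' i)^2 := by
      intro i; rw [hy]
    have e2 : ∀ i, (y i - X.mulVec β' i - γ i)^2 = (r i - γ i)^2 := by
      intro i; rw [hy]
    simp only [e1, e2]
    rw [← Finset.mul_sum, ← Finset.mul_sum] at hsum
    linarith
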